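/- On {α₁ < u₁ < α₂ < u₂ < α₃} with φ(z) = (z−α₁)(z−α₂)(z−α₃) and canonical Poisson bracket, the geodesic Hamiltonian 2H = I₁ = φ(u₁)p_{u₁}²/(u₁−u₂) + φ(u₂)p_{u₂}²/(u₂−u₁) Poisson-commutes with I₂ = u₂φ(u₁)p_{u₁}²/(u₂−u₁) + u₁φ(u₂)p_{u₂}²/(u₁−u₂). -/

import Mathlib

/-- Canonical Poisson bracket on phase space ℝ⁴ with coordinates
(u₁, u₂, p₁, p₂):  {F,G} = Σᵢ (∂F/∂uᵢ ∂G/∂pᵢ − ∂F/∂pᵢ ∂G/∂uᵢ). -/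
noncomputable def pb (F G : ℝ × ℝ × ℝ × ℝ → ℝ) (z : ℝ × ℝ × ℝ × ℝ) : ℝ :=
  fderiv ℝ F z (1, 0, 0, 0) * fderiv ℝ G z (0, 0, 1, 0)
  - fderiv ℝ F z (0, 0, 1, 0) * fderiv ℝ G z (1, 0, 0, 0)
  + fderiv ℝ F z (0, 1, 0, 0) * fderiv ℝ G z (0, 0, 0, 1)
  - fderiv ℝ F z (0, 0, 0, 1) * fderiv ℝ G z (0, 1, 0, 0)

set_option maxHeartbeats 4000000 in
/-- The geodesic Hamiltonian on the sphere in elliptic coordinates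
Poisson-commutes with the second integral I₂. -/
theorem stmt_13 (α₁ α₂ α₃ : ℝ) (h12 : α₁ < α₂) (h23 : α₂ < α₃) :
    ∀ z : ℝ × ℝ × ℝ × ℝ, α₁ < z.1 → z.1 < α₂ → α₂ < z.2.1 → z.2.1 < α₃ →
      pb (fun z => ((z.1 - α₁) * (z.1 - α₂) * (z.1 - α₃) * z.2.2.1 ^ 2
              / (z.1 - z.2.1)
            + (z.2.1 - α₁) * (z.2.1 - α₂) * (z.2.1 - α₃) * z.2.2.2 ^ 2
              / (z.2.1 - z.1)) / 2)
         (fun z => z.2.1 * (z.1 - α₁) * (z.1 - α₂) * (z.1 - α₃) * z.2.2.1 ^ 2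
              / (z.2.1 - z.1)
            + z.1 * (z.2.1 - α₁) * (z.2.1 - α₂) * (z.2.1 - α₃) * z.2.2.2 ^ 2
              / (z.1 - z.2.1)) z = 0 := by
  intro z hz1 hz2 hz3 hz4
  have hne12 : z.1 - z.2.1 ≠ 0 := sub_ne_zero.mpr (ne_of_lt (hz2.trans hz3))
  have hne21 : z.2.1 - z.1 ≠ 0 := sub_ne_zero.mpr (ne_of_gt (hz2.trans hz3))
  have e1 : HasFDerivAt (fun z : ℝ × ℝ × ℝ × ℝ => z.1)
      (ContinuousLinearMap.fst ℝ ℝ (ℝ × ℝ × ℝ)) z := hasFDerivAt_fst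
  have e2 : HasFDerivAt (fun z : ℝ × ℝ × ℝ × ℝ => z.2.1)
      ((ContinuousLinearMap.fst ℝ ℝ (ℝ × ℝ)).comp (ContinuousLinearMap.snd ℝ ℝ (ℝ × ℝ × ℝ))) z :=
    hasFDerivAt_fst.comp z hasFDerivAt_snd
  have e3 : HasFDerivAt (fun z : ℝ × ℝ × ℝ × ℝ => z.2.2.1)
      ((ContinuousLinearMap.fst ℝ ℝ ℝ).comp ((ContinuousLinearMap.snd ℝ ℝ (ℝ × ℝ)).comp
        (ContinuousLinearMap.snd ℝ ℝ (ℝ × ℝ × ℝ)))) z :=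
    hasFDerivAt_fst.comp z (hasFDerivAt_snd.comp z hasFDerivAt_snd)
  have e4 : HasFDerivAt (fun z : ℝ × ℝ × ℝ × ℝ => z.2.2.2)
      ((ContinuousLinearMap.snd ℝ ℝ ℝ).comp ((ContinuousLinearMap.snd ℝ ℝ (ℝ × ℝ)).comp
        (ContinuousLinearMap.snd ℝ ℝ (ℝ × ℝ × ℝ)))) z :=
    hasFDerivAt_snd.comp z (hasFDerivAt_snd.comp z hasFDerivAt_snd)
  have e3sq : HasFDerivAt (fun z : ℝ × ℝ × ℝ × ℝ => z.2.2.1 ^ 2) ((2 * z.2.2.1) •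
      ((ContinuousLinearMap.fst ℝ ℝ ℝ).comp ((ContinuousLinearMap.snd ℝ ℝ (ℝ × ℝ)).comp
        (ContinuousLinearMap.snd ℝ ℝ (ℝ × ℝ × ℝ))))) z := by
    have := e3.mul e3
    simp only [← pow_two] at this
    exact this.congr_fderiv (by module)
  have e4sq : HasFDerivAt (fun z : ℝ × ℝ × ℝ × ℝ => z.2.2.2 ^ 2) ((2 * z.2.2.2) •
      ((ContinuousLinearMap.snd ℝ ℝ ℝ).comp ((ContinuousLinearMap.snd ℝ ℝ (ℝ × ℝ)).comp
        (ContinuousLinearMap.snd ℝ ℝ (ℝ × ℝ × ℝ))))) z := by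
    have := e4.mul e4
    simp only [← pow_two] at this
    exact this.congr_fderiv (by module)
  have hinv12 : HasFDerivAt (fun z : ℝ × ℝ × ℝ × ℝ => (z.1 - z.2.1)⁻¹)
      ((-((z.1 - z.2.1) ^ 2)⁻¹) • (ContinuousLinearMap.fst ℝ ℝ (ℝ × ℝ × ℝ) -
        (ContinuousLinearMap.fst ℝ ℝ (ℝ × ℝ)).comp (ContinuousLinearMap.snd ℝ ℝ (ℝ × ℝ × ℝ)))) z :=
    (hasDerivAt_inv hne12).comp_hasFDerivAt z (e1.sub e2)
  have hinv21 : HasFDerivAt (fun z : ℝ × ℝ × ℝ × ℝ => (z.2.1 - z.1)⁻¹)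
      ((-((z.2.1 - z.1) ^ 2)⁻¹) • ((ContinuousLinearMap.fst ℝ ℝ (ℝ × ℝ)).comp
        (ContinuousLinearMap.snd ℝ ℝ (ℝ × ℝ × ℝ)) - ContinuousLinearMap.fst ℝ ℝ (ℝ × ℝ × ℝ))) z :=
    (hasDerivAt_inv hne21).comp_hasFDerivAt z (e2.sub e1)
  have hA := ((((e1.sub_const α₁).mul (e1.sub_const α₂)).mul (e1.sub_const α₃)).mul
      e3sq).mul hinv12
  have hB := ((((e2.sub_const α₁).mul (e2.sub_const α₂)).mul (e2.sub_const α₃)).mul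
      e4sq).mul hinv21
  have hF := (hA.add hB).mul_const ((2:ℝ)⁻¹)
  have hC := ((((e2.mul (e1.sub_const α₁)).mul (e1.sub_const α₂)).mul (e1.sub_const α₃)).mul
      e3sq).mul hinv21
  have hD := ((((e1.mul (e2.sub_const α₁)).mul (e2.sub_const α₂)).mul (e2.sub_const α₃)).mul
      e4sq).mul hinv12
  have hG := hC.add hD
  simp only [Pi.mul_def, Pi.add_def] at hF hG
  simp only [pb, div_eq_mul_inv, hF.fderiv, hG.fderiv]
  simp only [ContinuousLinearMap.add_apply, ContinuousLinearMap.smul_apply,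
    ContinuousLinearMap.sub_apply, ContinuousLinearMap.comp_apply,
    ContinuousLinearMap.coe_fst', ContinuousLinearMap.coe_snd',
    smul_eq_mul, ContinuousLinearMap.coe_smul', Pi.smul_apply]
  norm_num
  field_simp
  ring
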